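/- Let A be a symmetric general metric space (d x y = d y x for all x, y), M a left module and N a right module on A with M left adjoint to N, i.e. ⨅_{x ∈ A} (M x + N x) = 0 and d x y ≤ N y + M x for all x, y. Then M = N as functions A → ℝ≥0∞. -/
import Mathlib


open ENNReal Filter

/-- On a symmetric general metric space, any left adjoint module has the same
underlying map as its right adjoint. -/
theorem leftAdjoint_eq_rightAdjoint_of_symm {A : Type*} (d : A → A → ℝ≥0∞)
    (hrefl : ∀ x, d x x = 0)
    (htri : ∀ x y z, d x z ≤ d y z + d x y)
    (hsymm : ∀ x y, d x y = d y x)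
    (M : A → ℝ≥0∞) (hM : ∀ x y, M x ≤ M y + d x y)
    (N : A → ℝ≥0∞) (hN : ∀ x y, N y ≤ d x y + N x)
    (hcounit : (⨅ x, (M x + N x)) = 0)
    (hunit : ∀ x y, d x y ≤ N y + M x) :
    M = N := by
  haveI : Nonempty A := by
    by_contra h
    rw [not_nonempty_iff] at h
    rw [iInf_of_empty] at hcounit
    exact top_ne_zero hcounit
  funext x
  apply le_antisymm
  · have key : ∀ z, M x ≤ N x + 2 * (M z + N z) := by
      intro z
      calc M x ≤ M z + d x z := hM x z
        _ = M z + d z x := by rw [hsymm]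
        _ ≤ M z + (N x + M z) := by gcongr; exact hunit z x
        _ = N x + (M z + M z) := by ring
        _ ≤ N x + ((M z + N z) + (M z + N z)) := by gcongr <;> exact le_self_add
        _ = N x + 2 * (M z + N z) := by ring
    calc M x ≤ ⨅ z, (N x + 2 * (M z + N z)) := le_iInf key
      _ = N x + 2 * ⨅ z, (M z + N z) := by
          rw [ENNReal.mul_iInf (by norm_num), ENNReal.add_iInf]
      _ = N x := by rw [hcounit, mul_zero, add_zero]
  · have key : ∀ z, N x ≤ M x + 2 * (M z + N z) := by
      intro z
      calc N x ≤ d z x + N z := hN z x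
        _ = d x z + N z := by rw [hsymm]
        _ ≤ (N z + M x) + N z := by gcongr; exact hunit x z
        _ = M x + (N z + N z) := by ring
        _ ≤ M x + ((M z + N z) + (M z + N z)) := by gcongr <;> exact le_add_self
        _ = M x + 2 * (M z + N z) := by ring
    calc N x ≤ ⨅ z, (M x + 2 * (M z + N z)) := le_iInf key
      _ = M x + 2 * ⨅ z, (M z + N z) := by
          rw [ENNReal.mul_iInf (by norm_num), ENNReal.add_iInf]
      _ = M x := by rw [hcounit, mul_zero, add_zero]
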